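/- arXiv:1512.05129 — 4 statements merged into one kernel-verified Lean document; each statement's English description precedes it below -/
import Mathlib

section
/- Let n ≥ 1 and let u : ℝⁿ → ℝ be a C² function whose gradient satisfies |∇u(x)| ≤ 1 − ε for all x ∈ ℝⁿ, for some ε > 0 (in particular |∇u(x)| < 1, so the graph of u is spacelike and the gradient is bounded away from 1). Then u satisfies the f-maximal graph equation div(∇u/√(1 − |∇u|²))(x) = ⟨x, ∇u(x)⟩/√(1 − |∇u(x)|²) at every x ∈ ℝⁿ if and only if u is constant. -/
open scoped RealInnerProductSpace

/-- Euclidean divergence of a vector field on `ℝⁿ`. -/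
noncomputable def ediv {n : ℕ} (F : EuclideanSpace ℝ (Fin n) → EuclideanSpace ℝ (Fin n))
    (x : EuclideanSpace ℝ (Fin n)) : ℝ :=
  ∑ i, fderiv ℝ (fun y => F y i) x (EuclideanSpace.single i 1)

open MeasureTheory Filter Set Real

section aux
variable {n : ℕ} (u : EuclideanSpace ℝ (Fin n) → ℝ)

lemma grad_contDiff (hu : ContDiff ℝ 2 u) : ContDiff ℝ 1 (gradient u) := by
  have h1 : ContDiff ℝ 1 (fderiv ℝ u) := hu.fderiv_right (by norm_num)
  have h2 : gradient u = (InnerProductSpace.toDual ℝ (EuclideanSpace ℝ (Fin n))).symm ∘ fderiv ℝ u := rfl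
  rw [h2]
  exact ((InnerProductSpace.toDual ℝ (EuclideanSpace ℝ (Fin n))).symm.toContinuousLinearEquiv.contDiff).comp h1

lemma fderiv_apply_eq_inner (hu : ContDiff ℝ 2 u) (x v : EuclideanSpace ℝ (Fin n)) :
    fderiv ℝ u x v = ⟪gradient u x, v⟫ := by
  rw [gradient]
  exact (InnerProductSpace.toDual_symm_apply).symm

lemma div_formula (hu : ContDiff ℝ 2 u) (hq : ∀ x, 0 < 1 - ‖gradient u x‖ ^ 2)
    (heq : ∀ x, ediv (fun y => (Real.sqrt (1 - ‖gradient u y‖ ^ 2))⁻¹ • gradient u y) x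
        = ⟪x, gradient u x⟫ / Real.sqrt (1 - ‖gradient u x‖ ^ 2)) (x : EuclideanSpace ℝ (Fin n)) :
    ∑ i, fderiv ℝ (fun y => (Real.exp (-‖y‖ ^ 2 / 2) * u y) *
        ((Real.sqrt (1 - ‖gradient u y‖ ^ 2))⁻¹ * gradient u y i)) x (EuclideanSpace.single i 1)
      = Real.exp (-‖x‖ ^ 2 / 2) * ‖gradient u x‖ ^ 2 / Real.sqrt (1 - ‖gradient u x‖ ^ 2) := by
  set gu := gradient u with hgu
  set w : EuclideanSpace ℝ (Fin n) → ℝ := fun y => Real.sqrt (1 - ‖gu y‖ ^ 2) with hw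
  set ψ : EuclideanSpace ℝ (Fin n) → ℝ := fun y => Real.exp (-‖y‖ ^ 2 / 2) with hψ
  have hgud : Differentiable ℝ gu := (grad_contDiff u hu).differentiable one_ne_zero
  have hud : Differentiable ℝ u := hu.differentiable (by norm_num)
  have hwpos : ∀ y, 0 < w y := fun y => Real.sqrt_pos.2 (hq y)
  have hqd : Differentiable ℝ (fun y => 1 - ‖gu y‖ ^ 2) :=
    (differentiable_const 1).sub (hgud.norm_sq ℝ)
  have hwd : Differentiable ℝ w := fun y => (hqd y).sqrt (hq y).ne'
  have hwinv : Differentiable ℝ (fun y => (w y)⁻¹) := hwd.inv fun y => (hwpos y).ne'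
  have hguid : ∀ i : Fin n, Differentiable ℝ (fun y => gu y i) := fun i =>
    (EuclideanSpace.proj (𝕜 := ℝ) i).differentiable.comp hgud
  have hGi : ∀ i : Fin n, Differentiable ℝ (fun y => (w y)⁻¹ * gu y i) := fun i =>
    hwinv.mul (hguid i)
  have hψd : Differentiable ℝ ψ := by
    have h0 : Differentiable ℝ (fun y : EuclideanSpace ℝ (Fin n) => ‖y‖ ^ 2) :=
      (contDiff_norm_sq (𝕜 := ℝ) (n := 1)).differentiable one_ne_zero
    fun_prop
  have hφd : Differentiable ℝ (fun y => ψ y * u y) := hψd.mul hud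
  -- fderiv of ψ
  have hψ' : ∀ v, fderiv ℝ ψ x v = -(ψ x * ⟪x, v⟫) := by
    intro v
    have h0 : HasFDerivAt (fun y : EuclideanSpace ℝ (Fin n) => ‖y‖ ^ 2)
        (2 • (innerSL ℝ x)) x := (hasFDerivAt_id x).norm_sq
    have h1 : HasFDerivAt (fun y : EuclideanSpace ℝ (Fin n) => -‖y‖ ^ 2 / 2)
        ((-(1:ℝ)/2) • (2 • (innerSL ℝ x))) x := by
      have h1' := h0.const_mul (-(1:ℝ)/2)
      exact h1'.congr_of_eventuallyEq (Filter.Eventually.of_forall fun y =>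
        (by ring : -‖y‖ ^ 2 / 2 = -(1:ℝ)/2 * ‖y‖ ^ 2))
    have h2 := h1.exp
    rw [h2.fderiv]
    simp only [hψ, ContinuousLinearMap.smul_apply, smul_eq_mul, innerSL_apply_apply,
      innerSL_apply_apply]
    try ring
  -- fderiv of φ applied to basis vector
  have key : ∀ i : Fin n,
      fderiv ℝ (fun y => (ψ y * u y) * ((w y)⁻¹ * gu y i)) x (EuclideanSpace.single i 1)
        = (ψ x * u x) * fderiv ℝ (fun y => (w y)⁻¹ * gu y i) x (EuclideanSpace.single i 1)
          + ((w x)⁻¹ * gu x i) * (ψ x * gu x i - ψ x * u x * x i) := by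
    intro i
    rw [fderiv_fun_mul (hφd x) ((hGi i) x)]
    have hφ' : fderiv ℝ (fun y => ψ y * u y) x (EuclideanSpace.single i 1)
        = ψ x * gu x i - ψ x * u x * x i := by
      rw [fderiv_fun_mul (hψd x) (hud x)]
      have h3 : fderiv ℝ u x (EuclideanSpace.single i 1) = gu x i := by
        rw [fderiv_apply_eq_inner u hu]
        simp only [EuclideanSpace.inner_single_right, conj_trivial, one_mul, mul_one, hgu]
      have h4 : ⟪x, EuclideanSpace.single i 1⟫ = x i := by simp [EuclideanSpace.inner_single_right]
      simp only [ContinuousLinearMap.add_apply, ContinuousLinearMap.smul_apply, smul_eq_mul]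
      rw [h3, hψ' (EuclideanSpace.single i 1), h4]
      try ring
    simp only [ContinuousLinearMap.add_apply, ContinuousLinearMap.smul_apply, smul_eq_mul]
    rw [hφ']
    try ring
  have hdiv : ∑ i, fderiv ℝ (fun y => (w y)⁻¹ * gu y i) x (EuclideanSpace.single i 1)
      = ⟪x, gu x⟫ / w x := by
    have h := heq x
    unfold ediv at h
    exact h
  have hnorm : ∑ i, gu x i * gu x i = ‖gu x‖ ^ 2 := by
    rw [← real_inner_self_eq_norm_sq]
    simp only [PiLp.inner_apply, RCLike.inner_apply, conj_trivial]
  have hxg : ∑ i, x i * gu x i = ⟪x, gu x⟫ := by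
    simp [PiLp.inner_apply, RCLike.inner_apply, mul_comm]
  have hsum2 : ∑ i, ((w x)⁻¹ * gu x i) * (ψ x * gu x i - ψ x * u x * x i)
      = (w x)⁻¹ * ψ x * ‖gu x‖ ^ 2 - (w x)⁻¹ * ψ x * u x * ⟪x, gu x⟫ := by
    have h1 : ∀ i, ((w x)⁻¹ * gu x i) * (ψ x * gu x i - ψ x * u x * x i)
        = (w x)⁻¹ * ψ x * (gu x i * gu x i) - (w x)⁻¹ * ψ x * u x * (x i * gu x i) :=
      fun i => by ring
    simp only [h1]
    rw [Finset.sum_sub_distrib, ← Finset.mul_sum, ← Finset.mul_sum, hnorm, hxg]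
  calc ∑ i, fderiv ℝ (fun y => (ψ y * u y) * ((w y)⁻¹ * gu y i)) x (EuclideanSpace.single i 1)
      = ∑ i, ((ψ x * u x) * fderiv ℝ (fun y => (w y)⁻¹ * gu y i) x (EuclideanSpace.single i 1)
          + ((w x)⁻¹ * gu x i) * (ψ x * gu x i - ψ x * u x * x i)) :=
        Finset.sum_congr rfl (fun i _ => key i)
    _ = (ψ x * u x) * (∑ i, fderiv ℝ (fun y => (w y)⁻¹ * gu y i) x (EuclideanSpace.single i 1))
          + ∑ i, ((w x)⁻¹ * gu x i) * (ψ x * gu x i - ψ x * u x * x i) := by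
        rw [Finset.sum_add_distrib, Finset.mul_sum]
    _ = (ψ x * u x) * (⟪x, gu x⟫ / w x)
          + ((w x)⁻¹ * ψ x * ‖gu x‖ ^ 2 - (w x)⁻¹ * ψ x * u x * ⟪x, gu x⟫) := by
        rw [hdiv, hsum2]
    _ = ψ x * ‖gu x‖ ^ 2 / w x := by
        have hwne : w x ≠ 0 := (Real.sqrt_pos.2 (hq x)).ne'
        field_simp
        try ring

end aux

section aux2
variable {n : ℕ}

lemma coord_abs_le_norm (z : EuclideanSpace ℝ (Fin n)) (i : Fin n) : |z i| ≤ ‖z‖ := by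
  have h := abs_real_inner_le_norm z (EuclideanSpace.single i (1:ℝ))
  simpa [EuclideanSpace.norm_single, EuclideanSpace.inner_single_right] using h

lemma norm_le_of_coords (z : EuclideanSpace ℝ (Fin n)) (R : ℝ) (hR : 0 ≤ R)
    (h : ∀ j, |z j| ≤ R) : ‖z‖ ≤ Real.sqrt n * R := by
  rw [EuclideanSpace.norm_eq]
  have h2 : ∑ j, ‖z j‖ ^ 2 ≤ ∑ _j : Fin n, R ^ 2 := Finset.sum_le_sum (fun j _ => by
    rw [Real.norm_eq_abs]
    nlinarith [h j, abs_nonneg (z j)])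
  calc Real.sqrt (∑ j, ‖z j‖ ^ 2) ≤ Real.sqrt (n * R ^ 2) := Real.sqrt_le_sqrt (by simpa using h2)
    _ = Real.sqrt n * R := by rw [Real.sqrt_mul (by positivity), Real.sqrt_sq hR]

lemma u_growth (u : EuclideanSpace ℝ (Fin n) → ℝ) (hu : ContDiff ℝ 2 u)
    (h1 : ∀ x, ‖gradient u x‖ ≤ 1) (z : EuclideanSpace ℝ (Fin n)) : |u z| ≤ |u 0| + ‖z‖ := by
  have hud : Differentiable ℝ u := hu.differentiable (by norm_num)
  have hf : ∀ x, ‖fderiv ℝ u x‖ ≤ 1 := by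
    intro x
    have : ‖fderiv ℝ u x‖ = ‖gradient u x‖ := by
      rw [gradient]; exact (LinearIsometryEquiv.norm_map _ _).symm
    rw [this]; exact h1 x
  have h := convex_univ.norm_image_sub_le_of_norm_fderiv_le
    (fun y _ => hud y) (fun y _ => hf y) (Set.mem_univ 0) (Set.mem_univ z)
  rw [Real.norm_eq_abs] at h
  have : |u z| ≤ |u 0| + |u z - u 0| := by
    have := abs_add_le (u 0) (u z - u 0); simpa using this
  simp only [sub_zero, one_mul] at h
  linarith

end aux2

open MeasureTheory Set Topology

set_option maxHeartbeats 1000000 in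
lemma grad_eq_zero {m : ℕ} (u : EuclideanSpace ℝ (Fin (m+1)) → ℝ) (hu : ContDiff ℝ 2 u)
    (ε : ℝ) (hε : 0 < ε) (hgrad : ∀ x, ‖gradient u x‖ ≤ 1 - ε)
    (heq : ∀ x, ediv (fun y => (Real.sqrt (1 - ‖gradient u y‖ ^ 2))⁻¹ • gradient u y) x
        = ⟪x, gradient u x⟫ / Real.sqrt (1 - ‖gradient u x‖ ^ 2)) :
    ∀ x, gradient u x = 0 := by
  have hε1 : ε ≤ 1 := by nlinarith [hgrad 0, norm_nonneg (gradient u 0)]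
  have hq : ∀ x, 0 < 1 - ‖gradient u x‖ ^ 2 := fun x => by
    nlinarith [norm_nonneg (gradient u x), hgrad x]
  set c₀ : ℝ := 1 - (1-ε)^2 with hc₀def
  have hc₀ : 0 < c₀ := by nlinarith
  have hqc : ∀ x, c₀ ≤ 1 - ‖gradient u x‖ ^ 2 := fun x => by
    nlinarith [norm_nonneg (gradient u x), hgrad x]
  set w : EuclideanSpace ℝ (Fin (m+1)) → ℝ := fun y => Real.sqrt (1 - ‖gradient u y‖ ^ 2) with hwdef
  have hwpos : ∀ y, 0 < w y := fun y => Real.sqrt_pos.2 (hq y)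
  have hK0 : 0 < Real.sqrt c₀ := Real.sqrt_pos.2 hc₀
  set K : ℝ := (Real.sqrt c₀)⁻¹ with hKdef
  have hKpos : 0 < K := inv_pos.2 hK0
  have hwinvle : ∀ y, (w y)⁻¹ ≤ K := fun y =>
    inv_anti₀ hK0 (Real.sqrt_le_sqrt (hqc y))
  set ψ : EuclideanSpace ℝ (Fin (m+1)) → ℝ := fun y => Real.exp (-‖y‖ ^ 2 / 2) with hψdef
  have hψpos : ∀ y, 0 < ψ y := fun y => Real.exp_pos _
  set F : Fin (m+1) → EuclideanSpace ℝ (Fin (m+1)) → ℝ :=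
    fun i y => (ψ y * u y) * ((w y)⁻¹ * gradient u y i) with hFdef
  set g : EuclideanSpace ℝ (Fin (m+1)) → ℝ := fun x => ψ x * ‖gradient u x‖ ^ 2 / w x with hgdef
  have hdivf : ∀ x, ∑ i, fderiv ℝ (F i) x (EuclideanSpace.single i 1) = g x := fun x =>
    div_formula u hu hq heq x
  -- differentiability
  have hgud : Differentiable ℝ (gradient u) := (grad_contDiff u hu).differentiable one_ne_zero
  have hud : Differentiable ℝ u := hu.differentiable (by norm_num)
  have hqd : Differentiable ℝ (fun y => 1 - ‖gradient u y‖ ^ 2) :=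
    (differentiable_const 1).sub (hgud.norm_sq ℝ)
  have hwd : Differentiable ℝ w := fun y => ((hqd y).sqrt (hq y).ne')
  have hwinvd : Differentiable ℝ (fun y => (w y)⁻¹) := hwd.inv fun y => (hwpos y).ne'
  have hψd : Differentiable ℝ ψ := by
    have h0 : Differentiable ℝ (fun y : EuclideanSpace ℝ (Fin (m+1)) => ‖y‖ ^ 2) :=
      (contDiff_norm_sq (𝕜 := ℝ) (n := 1)).differentiable one_ne_zero
    fun_prop
  have hFd : ∀ i, Differentiable ℝ (F i) := fun i =>
    (hψd.mul hud).mul (hwinvd.mul ((EuclideanSpace.proj (𝕜 := ℝ) i).differentiable.comp hgud))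
  have hgc : Continuous g := by
    have hwc : Continuous w := hwd.continuous
    have h1 : Continuous fun x => ψ x * ‖gradient u x‖ ^ 2 :=
      (hψd.continuous.mul ((hgud.norm_sq ℝ).continuous))
    exact h1.div hwc fun y => (hwpos y).ne'
  set A : ℝ := |u 0| with hAdef
  have hA0 : 0 ≤ A := abs_nonneg _
  set B : ℝ := Real.sqrt ((m+1 : ℕ) : ℝ) with hBdef
  have hB0 : 0 ≤ B := Real.sqrt_nonneg _
  have hugrow : ∀ z, |u z| ≤ A + ‖z‖ := fun z =>
    u_growth u hu (fun x => (hgrad x).trans (by linarith)) z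
  set eqv : (Fin (m+1) → ℝ) ≃L[ℝ] EuclideanSpace ℝ (Fin (m+1)) :=
    (EuclideanSpace.equiv (Fin (m+1)) ℝ).symm with heqvdef
  have main : ∀ R : ℝ, 0 < R →
      (∫ y in Icc (fun _ : Fin (m+1) => -R) (fun _ => R), g (eqv y))
        ≤ (2*((m:ℝ)+1)) * ((Real.exp (-R^2/2) * ((A + B * R) * K)) * (2*R)^m) := by
    intro R hR
    set a : Fin (m+1) → ℝ := fun _ => -R with hadef
    set b : Fin (m+1) → ℝ := fun _ => R with hbdef
    have hab : a ≤ b := fun i => by simp only [hadef, hbdef]; linarith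
    set f : Fin (m+1) → (Fin (m+1) → ℝ) → ℝ := fun i y => F i (eqv y) with hfdef
    set f' : Fin (m+1) → (Fin (m+1) → ℝ) → (Fin (m+1) → ℝ) →L[ℝ] ℝ :=
      fun i y => (fderiv ℝ (F i) (eqv y)).comp
        (eqv : (Fin (m+1) → ℝ) →L[ℝ] EuclideanSpace ℝ (Fin (m+1))) with hf'def
    have hder : ∀ (y) (i : Fin (m+1)), HasFDerivAt (f i) (f' i y) y := fun y i =>
      ((hFd i (eqv y)).hasFDerivAt).comp y eqv.hasFDerivAt
    have hsum : ∀ y, (∑ i, f' i y (Pi.single i 1)) = g (eqv y) := by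
      intro y
      have h1 : ∀ i : Fin (m+1), f' i y (Pi.single i 1)
          = fderiv ℝ (F i) (eqv y) (EuclideanSpace.single i 1) := fun i => rfl
      simp only [h1]
      exact hdivf (eqv y)
    have hint : IntegrableOn (fun y => ∑ i, f' i y (Pi.single i 1)) (Icc a b) := by
      have hfg : (fun y => ∑ i, f' i y (Pi.single i 1)) = fun y => g (eqv y) := funext hsum
      rw [hfg]
      exact ((hgc.comp eqv.continuous).continuousOn).integrableOn_compact isCompact_Icc
    have hdt := integral_divergence_of_hasFDerivAt_off_countable' a b hab f f' ∅
      countable_empty (fun i => ((hFd i).continuous.comp eqv.continuous).continuousOn)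
      (fun x _ i => hder x i) hint
    simp only [hsum] at hdt
    have hfb : ∀ (i : Fin (m+1)) (r : ℝ), |r| = R →
        |∫ x in Icc (a ∘ Fin.succAbove i) (b ∘ Fin.succAbove i), f i (Fin.insertNth i r x)|
          ≤ (Real.exp (-R^2/2) * ((A + B * R) * K)) * (2*R)^m := by
      intro i r hr
      have hptw : ∀ x ∈ Icc (a ∘ Fin.succAbove i) (b ∘ Fin.succAbove i),
          ‖f i (Fin.insertNth i r x)‖ ≤ Real.exp (-R^2/2) * ((A + B * R) * K) := by
        intro x hx
        rw [Set.mem_Icc] at hx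
        set z : EuclideanSpace ℝ (Fin (m+1)) := eqv (Fin.insertNth i r x) with hzdef
        have hzi : z i = r := by
          rw [hzdef]
          show (Fin.insertNth (α := fun _ => ℝ) i r x) i = r
          exact Fin.insertNth_apply_same (α := fun _ => ℝ) i r x
        have hcoord : ∀ j, |z j| ≤ R := by
          intro j
          refine Fin.succAboveCases i ?_ ?_ j
          · rw [hzi, hr]
          · intro k
            have hzk : z (i.succAbove k) = x k := by
              rw [hzdef]
              show (Fin.insertNth (α := fun _ => ℝ) i r x) (i.succAbove k) = x k
              exact Fin.insertNth_apply_succAbove (α := fun _ => ℝ) i r x k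
            rw [hzk]
            have h1 := hx.1 k
            have h2 := hx.2 k
            simp only [hadef, hbdef, Function.comp_apply] at h1 h2
            rw [abs_le]; exact ⟨h1, h2⟩
        have hnlb : R ≤ ‖z‖ := by
          calc R = |z i| := by rw [hzi, hr]
            _ ≤ ‖z‖ := coord_abs_le_norm z i
        have hnub : ‖z‖ ≤ B * R := norm_le_of_coords z R hR.le hcoord
        have hψb : ψ z ≤ Real.exp (-R^2/2) := Real.exp_le_exp.2 (by nlinarith)
        have huzb : |u z| ≤ A + B * R := (hugrow z).trans (by linarith)
        have hGb : |(w z)⁻¹ * gradient u z i| ≤ K := by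
          rw [abs_mul]
          have h1 : |(w z)⁻¹| = (w z)⁻¹ := abs_of_pos (inv_pos.2 (hwpos z))
          have h2 : |gradient u z i| ≤ 1 :=
            (coord_abs_le_norm _ i).trans ((hgrad z).trans (by linarith))
          calc |(w z)⁻¹| * |gradient u z i| ≤ K * 1 :=
              mul_le_mul (by rw [h1]; exact hwinvle z) h2 (abs_nonneg _) hKpos.le
            _ = K := mul_one K
        have hfeq : ‖f i (Fin.insertNth i r x)‖
            = |(ψ z * u z) * ((w z)⁻¹ * gradient u z i)| := rfl
        rw [hfeq, abs_mul, abs_mul]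
        have hψz : |ψ z| = ψ z := abs_of_pos (hψpos z)
        calc |ψ z| * |u z| * |(w z)⁻¹ * gradient u z i|
            ≤ (Real.exp (-R^2/2) * (A + B * R)) * K := by
              apply mul_le_mul _ hGb (abs_nonneg _) (by positivity)
              exact mul_le_mul (by rw [hψz]; exact hψb) huzb (abs_nonneg _) (Real.exp_pos _).le
          _ = Real.exp (-R^2/2) * ((A + B * R) * K) := by ring
      have hab' : (a ∘ Fin.succAbove i) ≤ (b ∘ Fin.succAbove i) := fun j => by
        simp only [hadef, hbdef, Function.comp_apply]; linarith
      have hvol : (volume (Icc (a ∘ Fin.succAbove i) (b ∘ Fin.succAbove i))).toReal = (2*R)^m := by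
        rw [Real.volume_Icc_pi_toReal hab']
        have hterm : ∀ j : Fin m, (b ∘ Fin.succAbove i) j - (a ∘ Fin.succAbove i) j = 2*R :=
          fun j => by simp only [hadef, hbdef, Function.comp_apply]; ring
        rw [Finset.prod_congr rfl (fun j _ => hterm j), Finset.prod_const]
        simp
      have hle := norm_setIntegral_le_of_norm_le_const (μ := volume)
        (isCompact_Icc.measure_lt_top) hptw
      rw [Real.norm_eq_abs, measureReal_def, hvol] at hle
      exact hle
    have habs : ∀ i : Fin (m+1),
        |(∫ x in Icc (a ∘ Fin.succAbove i) (b ∘ Fin.succAbove i), f i (Fin.insertNth i (b i) x))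
          - ∫ x in Icc (a ∘ Fin.succAbove i) (b ∘ Fin.succAbove i), f i (Fin.insertNth i (a i) x)|
          ≤ 2 * ((Real.exp (-R^2/2) * ((A + B * R) * K)) * (2*R)^m) := by
      intro i
      have h1 := hfb i (b i) (by simp only [hbdef]; exact abs_of_pos hR)
      have h2 := hfb i (a i) (by simp only [hadef]; rw [abs_neg]; exact abs_of_pos hR)
      have h3 := (abs_sub _ _).trans (add_le_add h1 h2)
      linarith
    rw [hdt]
    refine le_trans (le_abs_self _) (le_trans (Finset.abs_sum_le_sum_abs _ _) ?_)
    refine le_trans (Finset.sum_le_sum fun i _ => habs i) ?_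
    rw [Finset.sum_const, Finset.card_univ, Fintype.card_fin, nsmul_eq_mul]
    push_cast
    ring_nf
    exact le_rfl
  -- conclusion
  intro x₀
  by_contra hx0
  have hg0 : ∀ y, 0 ≤ g y := fun y => by
    have := hψpos y
    have := hwpos y
    positivity
  have hgx : 0 < g x₀ := by
    have h1 : 0 < ‖gradient u x₀‖ ^ 2 := by
      have : 0 < ‖gradient u x₀‖ := norm_pos_iff.2 hx0
      positivity
    exact div_pos (mul_pos (hψpos x₀) h1) (hwpos x₀)
  set x' : Fin (m+1) → ℝ := (EuclideanSpace.equiv (Fin (m+1)) ℝ) x₀ with hx'def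
  have heqvx' : eqv x' = x₀ := by
    rw [hx'def, heqvdef]
    exact (EuclideanSpace.equiv (Fin (m+1)) ℝ).symm_apply_apply x₀
  obtain ⟨N₀, hN₀⟩ := exists_nat_gt ‖x'‖
  have hcoordlt : ∀ j, |x' j| < N₀ := fun j =>
    lt_of_le_of_lt (norm_le_pi_norm x' j) hN₀
  have hgint : ∀ a b : Fin (m+1) → ℝ, IntegrableOn (fun y => g (eqv y)) (Icc a b) :=
    fun a b => ((hgc.comp eqv.continuous).continuousOn).integrableOn_compact isCompact_Icc
  have hnn : ∀ a b : Fin (m+1) → ℝ,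
      0 ≤ᵐ[volume.restrict (Icc a b)] fun y => g (eqv y) :=
    fun a b => Filter.Eventually.of_forall fun y => hg0 (eqv y)
  set I : ℝ := ∫ y in Icc (fun _ : Fin (m+1) => -(N₀:ℝ)) (fun _ => (N₀:ℝ)), g (eqv y) with hIdef
  have hI : 0 < I := by
    rw [hIdef, setIntegral_pos_iff_support_of_nonneg_ae (hnn _ _) (hgint _ _)]
    set U : Set (Fin (m+1) → ℝ) :=
      (Set.pi univ fun _ : Fin (m+1) => Ioo (-(N₀:ℝ)) (N₀:ℝ)) ∩ {y | 0 < g (eqv y)} with hUdef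
    have hUopen : IsOpen U := by
      apply IsOpen.inter (isOpen_set_pi finite_univ fun _ _ => isOpen_Ioo)
      have : {y | 0 < g (eqv y)} = (fun y => g (eqv y)) ⁻¹' (Ioi 0) := rfl
      rw [this]
      exact (hgc.comp eqv.continuous).isOpen_preimage _ isOpen_Ioi
    have hx'U : x' ∈ U := by
      constructor
      · intro j _
        have := hcoordlt j
        rw [abs_lt] at this
        exact ⟨this.1, this.2⟩
      · show 0 < g (eqv x')
        rw [heqvx']
        exact hgx
    have hUsub : U ⊆ Function.support (fun y => g (eqv y)) ∩
        Icc (fun _ : Fin (m+1) => -(N₀:ℝ)) (fun _ => (N₀:ℝ)) := by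
      rintro y ⟨h1, h2⟩
      refine ⟨ne_of_gt h2, ?_⟩
      rw [Set.mem_Icc]
      exact ⟨fun j => (h1 j (mem_univ j)).1.le, fun j => (h1 j (mem_univ j)).2.le⟩
    exact lt_of_lt_of_le (hUopen.measure_pos volume ⟨x', hx'U⟩) (measure_mono hUsub)
  have hmono : ∀ N : ℕ, N₀ ≤ N →
      I ≤ ∫ y in Icc (fun _ : Fin (m+1) => -(N:ℝ)) (fun _ => (N:ℝ)), g (eqv y) := by
    intro N hN
    apply setIntegral_mono_set (hgint _ _) (hnn _ _)
    apply HasSubset.Subset.eventuallyLE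
    apply Icc_subset_Icc
    · intro j
      show -(N:ℝ) ≤ -(N₀:ℝ)
      have : (N₀:ℝ) ≤ N := Nat.cast_le.2 hN
      linarith
    · intro j
      exact_mod_cast Nat.cast_le.2 hN
  set C : ℝ := (2*((m:ℝ)+1)) * (K * (A+B) * 2^m) with hCdef
  have hreal : Filter.Tendsto
      (fun R : ℝ => (2*((m:ℝ)+1)) * ((Real.exp (-R^2/2) * ((A + B * R) * K)) * (2*R)^m))
      Filter.atTop (𝓝 0) := by
    have hCtend : Filter.Tendsto (fun R : ℝ => C * (R^(m+1) * Real.exp (-R)))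
        Filter.atTop (𝓝 0) := by
      have := (tendsto_pow_mul_exp_neg_atTop_nhds_zero (m+1)).const_mul C
      rwa [mul_zero] at this
    apply squeeze_zero' ?_ ?_ hCtend
    · filter_upwards [Filter.eventually_ge_atTop (2:ℝ)] with R hR
      have hR0 : (0:ℝ) ≤ R := by linarith
      have hexp : (0:ℝ) ≤ Real.exp (-R^2/2) := (Real.exp_pos _).le
      have h2R : (0:ℝ) ≤ 2*R := by linarith
      have hABK : (0:ℝ) ≤ (A + B * R) * K :=
        mul_nonneg (add_nonneg hA0 (mul_nonneg hB0 hR0)) hKpos.le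
      have hm1 : (0:ℝ) ≤ 2*((m:ℝ)+1) := by positivity
      exact mul_nonneg hm1 (mul_nonneg (mul_nonneg hexp hABK) (pow_nonneg h2R m))
    · filter_upwards [Filter.eventually_ge_atTop (2:ℝ)] with R hR
      have hR0 : (0:ℝ) ≤ R := by linarith
      have e1 : Real.exp (-R^2/2) ≤ Real.exp (-R) := Real.exp_le_exp.2 (by nlinarith)
      have e2 : A + B*R ≤ (A+B)*R := by nlinarith
      have e3 : (0:ℝ) ≤ R^m := pow_nonneg hR0 m
      calc (2*((m:ℝ)+1)) * ((Real.exp (-R^2/2) * ((A + B * R) * K)) * (2*R)^m)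
          = (2*((m:ℝ)+1) * K * 2^m) * (Real.exp (-R^2/2) * ((A + B*R) * R^m)) := by
            rw [mul_pow]; ring
        _ ≤ (2*((m:ℝ)+1) * K * 2^m) * (Real.exp (-R) * (((A+B)*R) * R^m)) := by
            have hc1 : (0:ℝ) ≤ 2*((m:ℝ)+1) * K * 2^m :=
              mul_nonneg (mul_nonneg (by positivity) hKpos.le) (by positivity)
            apply mul_le_mul_of_nonneg_left _ hc1
            apply mul_le_mul e1 (mul_le_mul_of_nonneg_right e2 e3)
              (mul_nonneg (add_nonneg hA0 (mul_nonneg hB0 hR0)) e3) (Real.exp_pos _).le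
        _ = C * (R^(m+1) * Real.exp (-R)) := by rw [hCdef, pow_succ]; ring
  have htend : Filter.Tendsto
      (fun N : ℕ => (2*((m:ℝ)+1)) * ((Real.exp (-(N:ℝ)^2/2) * ((A + B * (N:ℝ)) * K)) * (2*(N:ℝ))^m))
      Filter.atTop (𝓝 0) := hreal.comp tendsto_natCast_atTop_atTop
  have hev : ∀ᶠ N : ℕ in Filter.atTop,
      I ≤ (2*((m:ℝ)+1)) * ((Real.exp (-(N:ℝ)^2/2) * ((A + B * (N:ℝ)) * K)) * (2*(N:ℝ))^m) := by
    rw [Filter.eventually_atTop]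
    refine ⟨max N₀ 1, fun N hN => ?_⟩
    have h1 : N₀ ≤ N := le_trans (le_max_left _ _) hN
    have h2 : (0:ℝ) < N := by
      have : 1 ≤ N := le_trans (le_max_right _ _) hN
      exact_mod_cast this
    exact (hmono N h1).trans (main (N:ℝ) h2)
  have : I ≤ 0 := ge_of_tendsto htend hev
  linarith
/-- A `C²` entire graph over Gauss space `𝔾ⁿ`, with gradient bounded away from `1`,
is `f`-maximal if and only if the defining function is constant. -/
theorem entire_f_maximal_graph_iff_const (n : ℕ) (hn : 1 ≤ n)
    (u : EuclideanSpace ℝ (Fin n) → ℝ) (hu : ContDiff ℝ 2 u)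
    (ε : ℝ) (hε : 0 < ε) (hgrad : ∀ x, ‖gradient u x‖ ≤ 1 - ε) :
    (∀ x, ediv (fun y => (Real.sqrt (1 - ‖gradient u y‖ ^ 2))⁻¹ • gradient u y) x
        = ⟪x, gradient u x⟫ / Real.sqrt (1 - ‖gradient u x‖ ^ 2)) ↔
      ∃ c : ℝ, ∀ x, u x = c := by
  obtain ⟨m, rfl⟩ : ∃ m, n = m + 1 := ⟨n - 1, (Nat.succ_pred_eq_of_pos hn).symm⟩
  constructor
  · intro heq
    have h0 := grad_eq_zero u hu ε hε hgrad heq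
    refine ⟨u 0, fun x => ?_⟩
    have hfz : ∀ x, fderiv ℝ u x = 0 := by
      intro x
      have h1 := h0 x
      rw [gradient] at h1
      have h2 := congrArg (InnerProductSpace.toDual ℝ (EuclideanSpace ℝ (Fin (m+1)))) h1
      rw [LinearIsometryEquiv.apply_symm_apply] at h2
      simpa using h2
    exact is_const_of_fderiv_eq_zero (hu.differentiable (by norm_num)) hfz x 0
  · rintro ⟨c, hc⟩ x
    have hu' : u = fun _ => c := funext hc
    have hgradz : ∀ y, gradient u y = 0 := by
      intro y
      rw [hu', gradient]
      simp
    simp only [hgradz]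
    unfold ediv
    simp
end

section
/- Let n ≥ 1 and define u : ℝⁿ → ℝ by u(x) = ∫₀^{x₁} √(e^{τ²}/(1 + e^{τ²})) dτ, where x = (x₁, …, xₙ). Then for every x ∈ ℝⁿ, the gradient of u satisfies 1 − |∇u(x)|² = 1/(1 + e^{x₁²}); in particular 0 < 1 − |∇u(x)|², so the graph of u in ℝ^{n+1} with the Lorentzian metric dx₁² + … + dxₙ² − dx_{n+1}² is spacelike. -/
open Real

lemma cont_aux : Continuous (fun τ : ℝ => Real.sqrt (Real.exp (τ ^ 2) / (1 + Real.exp (τ ^ 2)))) := by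
  apply Real.continuous_sqrt.comp
  apply Continuous.div
  · exact Real.continuous_exp.comp (continuous_pow 2)
  · exact continuous_const.add (Real.continuous_exp.comp (continuous_pow 2))
  · intro t
    positivity

/-- For `u(x) = ∫₀^{x₁} √(e^{τ²}/(1+e^{τ²})) dτ` on `ℝⁿ`, one has
`1 - |∇u(x)|² = 1/(1 + e^{x₁²}) > 0`, so the graph of `u` is spacelike. -/
theorem example_graph_spacelike (n : ℕ) (hn : 0 < n)
    (u : EuclideanSpace ℝ (Fin n) → ℝ)
    (hu : ∀ x, u x = ∫ τ in (0 : ℝ)..(x ⟨0, hn⟩),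
        Real.sqrt (Real.exp (τ ^ 2) / (1 + Real.exp (τ ^ 2)))) :
    ∀ x, 1 - ‖gradient u x‖ ^ 2 = 1 / (1 + Real.exp ((x ⟨0, hn⟩) ^ 2)) ∧
      0 < 1 - ‖gradient u x‖ ^ 2 := by
  intro x
  set i : Fin n := ⟨0, hn⟩
  set f : ℝ → ℝ := fun τ => Real.sqrt (Real.exp (τ ^ 2) / (1 + Real.exp (τ ^ 2))) with hf
  set c : ℝ := f (x i) with hc
  -- FTC: the integral function has derivative f (x i)
  have hderiv : HasDerivAt (fun s => ∫ τ in (0:ℝ)..s, f τ) c (x i) :=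
    (cont_aux.integral_hasStrictDerivAt 0 (x i)).hasDerivAt
  -- projection is a continuous linear map
  have hproj : HasFDerivAt (EuclideanSpace.proj i : EuclideanSpace ℝ (Fin n) →L[ℝ] ℝ)
      (EuclideanSpace.proj i : EuclideanSpace ℝ (Fin n) →L[ℝ] ℝ) x :=
    ContinuousLinearMap.hasFDerivAt _
  have hcomp : HasFDerivAt u (c • (EuclideanSpace.proj i : EuclideanSpace ℝ (Fin n) →L[ℝ] ℝ)) x := by
    have h1 := hderiv.comp_hasFDerivAt x hproj
    exact h1.congr_of_eventuallyEq (by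
      filter_upwards with y
      rw [hu y]
      rfl)
  have hgrad : HasGradientAt u (c • EuclideanSpace.single i (1:ℝ)) x := by
    rw [hasGradientAt_iff_hasFDerivAt]
    convert hcomp using 1
    case e'_5 => rfl
    case e'_6 => rfl
    case e'_8 => rfl
    case e'_12 =>
      ext w
      simp [InnerProductSpace.toDual_apply_apply, real_inner_smul_left,
        EuclideanSpace.inner_single_left, mul_comm]
    rfl
  have hg : gradient u x = c • EuclideanSpace.single i (1:ℝ) := hgrad.gradient
  have hnorm : ‖gradient u x‖ = |c| := by
    rw [hg, norm_smul, EuclideanSpace.norm_single]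
    simp
  have hc_sq : c ^ 2 = Real.exp ((x i) ^ 2) / (1 + Real.exp ((x i) ^ 2)) := by
    rw [hc, hf]
    exact Real.sq_sqrt (by positivity)
  have hpos : (0:ℝ) < 1 + Real.exp ((x i) ^ 2) := by positivity
  have key : 1 - ‖gradient u x‖ ^ 2 = 1 / (1 + Real.exp ((x i) ^ 2)) := by
    rw [hnorm, sq_abs, hc_sq]
    field_simp
    ring
  exact ⟨key, by rw [key]; positivity⟩
end

section
/- Let n ≥ 1 and define u : ℝⁿ → ℝ by u(x) = ∫₀^{x₁} √(e^{τ²}/(1 + e^{τ²})) dτ, where x = (x₁, …, xₙ). Then u satisfies the f-maximal graph equation: for every x ∈ ℝⁿ, div(∇u/√(1 − |∇u|²))(x) − ⟨x, ∇u(x)⟩/√(1 − |∇u(x)|²) = 0. Hence the entire graph Σ₀ of u is a non-planar entire f-maximal graph in 𝔾ⁿ × ℝ₁. -/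
open scoped RealInnerProductSpace

noncomputable def gfun (τ : ℝ) : ℝ := Real.sqrt (Real.exp (τ ^ 2) / (1 + Real.exp (τ ^ 2)))

lemma contg : Continuous gfun := by
  apply Real.continuous_sqrt.comp
  exact Continuous.div (by continuity) (by continuity) (fun t => by positivity)

lemma onepE_pos (t : ℝ) : (0:ℝ) < 1 + Real.exp (t ^ 2) := by positivity

lemma gsq (t : ℝ) : gfun t ^ 2 = Real.exp (t ^ 2) / (1 + Real.exp (t ^ 2)) := by
  rw [gfun, Real.sq_sqrt]; positivity

lemma one_sub_gsq (t : ℝ) : 1 - gfun t ^ 2 = (1 + Real.exp (t ^ 2))⁻¹ := by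
  rw [gsq]; field_simp; ring

lemma sqrtE (t : ℝ) : Real.sqrt (Real.exp (t^2)) = Real.exp (t^2/2) := by
  rw [show Real.exp (t^2) = Real.exp (t^2/2) ^ 2 by rw [← Real.exp_nat_mul]; ring_nf,
    Real.sqrt_sq (Real.exp_pos _).le]

lemma key (t : ℝ) : (Real.sqrt (1 - gfun t ^ 2))⁻¹ * gfun t = Real.exp (t ^ 2 / 2) := by
  rw [one_sub_gsq, gfun, Real.sqrt_inv, inv_inv, ← Real.sqrt_mul (onepE_pos t).le,
    mul_div_cancel₀ _ (onepE_pos t).ne', sqrtE]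

lemma hasDerivH (t : ℝ) : HasDerivAt (fun s : ℝ => Real.exp (s ^ 2 / 2)) (t * Real.exp (t ^ 2 / 2)) t := by
  have h1 : HasDerivAt (fun s : ℝ => s ^ 2 / 2) t t := by
    simpa using (hasDerivAt_pow 2 t).div_const 2
  simpa [mul_comm] using h1.exp

section main
variable {n : ℕ}

lemma hasGrad (i0 : Fin n) (G : ℝ → ℝ) (g : ℝ → ℝ) (x : EuclideanSpace ℝ (Fin n))
    (hG : HasDerivAt G (g (x i0)) (x i0)) :
    HasGradientAt (fun y : EuclideanSpace ℝ (Fin n) => G (y i0))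
      (EuclideanSpace.single i0 (g (x i0))) x := by
  have hproj : HasFDerivAt (fun y : EuclideanSpace ℝ (Fin n) => y i0)
      (EuclideanSpace.proj i0 : EuclideanSpace ℝ (Fin n) →L[ℝ] ℝ) x :=
    (EuclideanSpace.proj i0 : EuclideanSpace ℝ (Fin n) →L[ℝ] ℝ).hasFDerivAt
  have h := hG.comp_hasFDerivAt x hproj
  have hdual : (InnerProductSpace.toDual ℝ (EuclideanSpace ℝ (Fin n)))
      (EuclideanSpace.single i0 (g (x i0)))
      = (g (x i0)) • (EuclideanSpace.proj i0 : EuclideanSpace ℝ (Fin n) →L[ℝ] ℝ) := by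
    ext y
    simp [InnerProductSpace.toDual_apply_apply, EuclideanSpace.inner_single_left]
  exact hasGradientAt_iff_hasFDerivAt.mpr (hdual ▸ h)

end main

theorem example_entire_f_maximal_nonplanar' (n : ℕ) (hn : 0 < n)
    (u : EuclideanSpace ℝ (Fin n) → ℝ)
    (hu : ∀ x, u x = ∫ τ in (0 : ℝ)..(x ⟨0, hn⟩),
        Real.sqrt (Real.exp (τ ^ 2) / (1 + Real.exp (τ ^ 2)))) :
      ¬ ∃ (a : EuclideanSpace ℝ (Fin n)) (b : ℝ), ∀ x, u x = ⟪a, x⟫ + b := by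
  set i0 : Fin n := ⟨0, hn⟩
  rintro ⟨a, b, hab⟩
  have hsingle : ∀ t : ℝ, (EuclideanSpace.single i0 t : EuclideanSpace ℝ (Fin n)) i0 = t := by
    intro t; simp [EuclideanSpace.single_apply]
  have hGt : ∀ t : ℝ, (∫ τ in (0:ℝ)..t, gfun τ) = t * a i0 + b := by
    intro t
    have h1 := hu (EuclideanSpace.single i0 t)
    have h2 := hab (EuclideanSpace.single i0 t)
    rw [hsingle t] at h1
    rw [show (∫ τ in (0:ℝ)..t, gfun τ) = u (EuclideanSpace.single i0 t) from h1.symm,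
      h2, EuclideanSpace.inner_single_right]
    simp [mul_comm]
  have hconst : ∀ t : ℝ, gfun t = a i0 := by
    intro t
    have h1 : HasDerivAt (fun s : ℝ => ∫ τ in (0:ℝ)..s, gfun τ) (gfun t) t :=
      (contg.integral_hasStrictDerivAt 0 t).hasDerivAt
    have h2 : HasDerivAt (fun s : ℝ => s * a i0 + b) (a i0) t := by
      simpa using ((hasDerivAt_id t).mul_const (a i0)).add_const b
    have : (fun s : ℝ => ∫ τ in (0:ℝ)..s, gfun τ) = fun s : ℝ => s * a i0 + b :=
      funext hGt
    rw [this] at h1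
    exact h1.unique h2
  have h01 : gfun 0 < gfun 1 := by
    apply Real.sqrt_lt_sqrt (by positivity)
    rw [div_lt_div_iff₀ (by positivity) (by positivity)]
    have h := Real.exp_one_gt_d9
    simp only [pow_two, mul_zero, mul_one, Real.exp_zero, zero_pow, one_pow, zero_mul]
    nlinarith [Real.exp_pos (1:ℝ)]
  rw [hconst 0, hconst 1] at h01
  exact lt_irrefl _ h01

theorem pde (n : ℕ) (hn : 0 < n)
    (u : EuclideanSpace ℝ (Fin n) → ℝ)
    (hu : ∀ x, u x = ∫ τ in (0 : ℝ)..(x ⟨0, hn⟩),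
        Real.sqrt (Real.exp (τ ^ 2) / (1 + Real.exp (τ ^ 2)))) :
    ∀ x, (∑ i, fderiv ℝ (fun y => ((Real.sqrt (1 - ‖gradient u y‖ ^ 2))⁻¹ • gradient u y) i) x
            (EuclideanSpace.single i 1))
        - ⟪x, gradient u x⟫ / Real.sqrt (1 - ‖gradient u x‖ ^ 2) = 0 := by
  set i0 : Fin n := ⟨0, hn⟩
  have hueq : u = fun y => (fun t => ∫ τ in (0:ℝ)..t, gfun τ) (y i0) := funext hu
  have hgrad : ∀ x : EuclideanSpace ℝ (Fin n),
      HasGradientAt u (EuclideanSpace.single i0 (gfun (x i0))) x := by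
    intro x
    rw [hueq]
    exact hasGrad i0 _ gfun x ((contg.integral_hasStrictDerivAt 0 (x i0)).hasDerivAt)
  have hgrad' : ∀ x : EuclideanSpace ℝ (Fin n),
      gradient u x = EuclideanSpace.single i0 (gfun (x i0)) := fun x => (hgrad x).gradient
  have hnorm : ∀ x : EuclideanSpace ℝ (Fin n), ‖gradient u x‖ ^ 2 = gfun (x i0) ^ 2 := by
    intro x; rw [hgrad', EuclideanSpace.norm_single, Real.norm_eq_abs, sq_abs]
  have hF : ∀ y : EuclideanSpace ℝ (Fin n),
      (Real.sqrt (1 - ‖gradient u y‖ ^ 2))⁻¹ • gradient u y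
        = EuclideanSpace.single i0 (Real.exp ((y i0) ^ 2 / 2)) := by
    intro y
    rw [hgrad', EuclideanSpace.norm_single, Real.norm_eq_abs, sq_abs, ← key (y i0)]
    ext j
    simp [EuclideanSpace.single_apply, mul_ite]
  intro x
  set t := x i0 with ht
  have hsum : (∑ i, fderiv ℝ
      (fun y => ((Real.sqrt (1 - ‖gradient u y‖ ^ 2))⁻¹ • gradient u y) i) x
      (EuclideanSpace.single i 1)) = t * Real.exp (t ^ 2 / 2) := by
    rw [Finset.sum_eq_single i0]
    · have hfun : (fun y : EuclideanSpace ℝ (Fin n) =>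
          ((Real.sqrt (1 - ‖gradient u y‖ ^ 2))⁻¹ • gradient u y) i0)
          = fun y : EuclideanSpace ℝ (Fin n) => Real.exp ((y i0) ^ 2 / 2) := by
        funext y; rw [hF y]; simp [EuclideanSpace.single_apply]
      rw [hfun]
      have hproj : HasFDerivAt (fun y : EuclideanSpace ℝ (Fin n) => y i0)
          (EuclideanSpace.proj i0 : EuclideanSpace ℝ (Fin n) →L[ℝ] ℝ) x :=
        (EuclideanSpace.proj i0 : EuclideanSpace ℝ (Fin n) →L[ℝ] ℝ).hasFDerivAt
      have hcomp : HasFDerivAt (fun y : EuclideanSpace ℝ (Fin n) => Real.exp ((y i0) ^ 2 / 2))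
          ((t * Real.exp (t ^ 2 / 2)) • (EuclideanSpace.proj i0 : EuclideanSpace ℝ (Fin n) →L[ℝ] ℝ)) x :=
        by have h := (hasDerivH t).comp_hasFDerivAt x hproj; exact h
      rw [hcomp.fderiv]
      simp [EuclideanSpace.single_apply]
    · intro i _ hi
      have hfun : (fun y : EuclideanSpace ℝ (Fin n) =>
          ((Real.sqrt (1 - ‖gradient u y‖ ^ 2))⁻¹ • gradient u y) i)
          = fun _ : EuclideanSpace ℝ (Fin n) => (0:ℝ) := by
        funext y; rw [hF y]; simp [EuclideanSpace.single_apply, hi]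
      rw [hfun, fderiv_fun_const]
      simp
    · simp
  rw [hsum, hgrad', EuclideanSpace.norm_single, Real.norm_eq_abs, sq_abs,
    EuclideanSpace.inner_single_right]
  have hpos : 0 < Real.sqrt (1 - gfun t ^ 2) := by
    rw [one_sub_gsq]; positivity
  rw [← ht]
  simp only [starRingEnd_apply, star_trivial]
  rw [← key t]
  ring

/-- The function `u(x) = ∫₀^{x₁} √(e^{τ²}/(1+e^{τ²})) dτ` satisfies the `f`-maximal
graph equation in `𝔾ⁿ × ℝ₁`, and its entire graph is non-planar (u is not affine). -/
theorem example_entire_f_maximal_nonplanar (n : ℕ) (hn : 0 < n)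
    (u : EuclideanSpace ℝ (Fin n) → ℝ)
    (hu : ∀ x, u x = ∫ τ in (0 : ℝ)..(x ⟨0, hn⟩),
        Real.sqrt (Real.exp (τ ^ 2) / (1 + Real.exp (τ ^ 2)))) :
    (∀ x, ediv (fun y => (Real.sqrt (1 - ‖gradient u y‖ ^ 2))⁻¹ • gradient u y) x
        - ⟪x, gradient u x⟫ / Real.sqrt (1 - ‖gradient u x‖ ^ 2) = 0) ∧
      ¬ ∃ (a : EuclideanSpace ℝ (Fin n)) (b : ℝ), ∀ x, u x = ⟪a, x⟫ + b := by
  exact ⟨fun x => pde n hn u hu x, example_entire_f_maximal_nonplanar' n hn u hu⟩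
end

section
/- Let u : ℝⁿ → ℝ be a C² function with |∇u(x)| < 1 for all x, satisfying the f-maximal graph equation div(∇u/√(1 − |∇u|²))(x) = ⟨x, ∇u(x)⟩/√(1 − |∇u(x)|²) for all x ∈ ℝⁿ. Define the vector field V : ℝ^{n+1} → ℝ^{n+1} by V(x, t) = e^{-|x|²/2} · (∇u(x), 1)/√(1 − |∇u(x)|²) (the weighted extension of the future-directed unit timelike normal of the graph of u by translations along the t-axis). Then the Euclidean divergence of V on ℝ^{n+1} vanishes identically: div V(x, t) = 0 for all (x, t) ∈ ℝ^{n+1}. -/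
open scoped RealInnerProductSpace

/-- Euclidean divergence of a vector field on `ℝⁿ × ℝ = ℝ^{n+1}`. -/
noncomputable def pdiv {n : ℕ}
    (F : EuclideanSpace ℝ (Fin n) × ℝ → EuclideanSpace ℝ (Fin n) × ℝ)
    (p : EuclideanSpace ℝ (Fin n) × ℝ) : ℝ :=
  (∑ i, fderiv ℝ (fun q => (F q).1 i) p (EuclideanSpace.single i 1, 0))
    + fderiv ℝ (fun q => (F q).2) p (0, 1)

lemma aux_fderiv_comp_fst {E F G : Type*} [NormedAddCommGroup E] [NormedSpace ℝ E]
    [NormedAddCommGroup F] [NormedSpace ℝ F] [NormedAddCommGroup G] [NormedSpace ℝ G]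
    (h : E → G) (p : E × F) (hd : DifferentiableAt ℝ h p.1) (v : E) (w : F) :
    fderiv ℝ (fun q : E × F => h q.1) p (v, w) = fderiv ℝ h p.1 v := by
  have h1 : HasFDerivAt (fun q : E × F => h q.1)
      ((fderiv ℝ h p.1).comp (ContinuousLinearMap.fst ℝ E F)) p :=
    hd.hasFDerivAt.comp p hasFDerivAt_fst
  rw [h1.fderiv]; rfl

lemma aux_hasFDerivAt_rho {n : ℕ} (y : EuclideanSpace ℝ (Fin n)) :
    HasFDerivAt (fun z : EuclideanSpace ℝ (Fin n) => Real.exp (-‖z‖ ^ 2 / 2))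
      (Real.exp (-‖y‖ ^ 2 / 2) • ((-(2:ℝ)⁻¹) • ((2:ℕ) • innerSL ℝ y))) y := by
  have h1 : HasFDerivAt (fun z : EuclideanSpace ℝ (Fin n) => ‖z‖ ^ 2) ((2:ℕ) • innerSL ℝ y) y :=
    (hasStrictFDerivAt_norm_sq y).hasFDerivAt
  have h2 := h1.const_mul (-(2:ℝ)⁻¹)
  have heq : (fun z : EuclideanSpace ℝ (Fin n) => -(2:ℝ)⁻¹ * ‖z‖ ^ 2)
      = fun z : EuclideanSpace ℝ (Fin n) => -‖z‖ ^ 2 / 2 := by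
    funext z; ring
  rw [heq] at h2
  exact h2.exp

/-- For a `C²` solution `u` of the `f`-maximal graph equation with `|∇u| < 1`, the weighted
extension `V(x,t) = e^{-|x|²/2} (∇u(x),1)/√(1-|∇u(x)|²)` of the future-directed unit
timelike normal has vanishing Euclidean divergence on `ℝ^{n+1}`. -/
theorem weighted_normal_divergence_free (n : ℕ) (hn : 1 ≤ n)
    (u : EuclideanSpace ℝ (Fin n) → ℝ) (hu : ContDiff ℝ 2 u)
    (hgrad : ∀ x, ‖gradient u x‖ < 1)
    (hmax : ∀ x, ediv (fun y => (Real.sqrt (1 - ‖gradient u y‖ ^ 2))⁻¹ • gradient u y) x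
        = ⟪x, gradient u x⟫ / Real.sqrt (1 - ‖gradient u x‖ ^ 2))
    (V : EuclideanSpace ℝ (Fin n) × ℝ → EuclideanSpace ℝ (Fin n) × ℝ)
    (hV : ∀ x t, V (x, t)
        = (Real.exp (-‖x‖ ^ 2 / 2) / Real.sqrt (1 - ‖gradient u x‖ ^ 2))
            • (gradient u x, (1 : ℝ))) :
    ∀ p, pdiv V p = 0 := by
  classical
  set g : EuclideanSpace ℝ (Fin n) → EuclideanSpace ℝ (Fin n) := gradient u with hg_def
  set ρ : EuclideanSpace ℝ (Fin n) → ℝ := fun x => Real.exp (-‖x‖ ^ 2 / 2) with hρ_def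
  set W : EuclideanSpace ℝ (Fin n) → ℝ := fun x => Real.sqrt (1 - ‖g x‖ ^ 2) with hW_def
  set F : EuclideanSpace ℝ (Fin n) → EuclideanSpace ℝ (Fin n) := fun y => (W y)⁻¹ • g y
    with hF_def
  -- basic facts
  have hgC : ContDiff ℝ 1 g := by
    have h1 : ContDiff ℝ 1 (fderiv ℝ u) := hu.fderiv_right (le_refl _)
    have h2 : g = fun x => (InnerProductSpace.toDual ℝ
        (EuclideanSpace ℝ (Fin n))).symm (fderiv ℝ u x) := rfl
    rw [h2]
    exact (InnerProductSpace.toDual ℝ (EuclideanSpace ℝ (Fin n))).symm.contDiff.comp h1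
  have hgd : Differentiable ℝ g := hgC.differentiable one_ne_zero
  have hspos : ∀ x, (0:ℝ) < 1 - ‖g x‖ ^ 2 := by
    intro x
    have h := hgrad x
    nlinarith [norm_nonneg (g x)]
  have hWpos : ∀ x, (0:ℝ) < W x := fun x => Real.sqrt_pos.mpr (hspos x)
  have hsd : Differentiable ℝ fun x : EuclideanSpace ℝ (Fin n) => 1 - ‖g x‖ ^ 2 :=
    (differentiable_const 1).sub ((hgC.norm_sq ℝ).differentiable one_ne_zero)
  have hWd : ∀ x, DifferentiableAt ℝ W x := fun x => (hsd x).sqrt (ne_of_gt (hspos x))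
  have hWinvd : ∀ x, DifferentiableAt ℝ (fun y => (W y)⁻¹) x := fun x =>
    (hWd x).inv (ne_of_gt (hWpos x))
  have hFd : ∀ x, DifferentiableAt ℝ F x := fun x => (hWinvd x).smul (hgd x)
  have hFid : ∀ x (i : Fin n), DifferentiableAt ℝ (fun y => F y i) x := by
    intro x i
    exact (EuclideanSpace.proj i : EuclideanSpace ℝ (Fin n) →L[ℝ] ℝ).differentiableAt.comp
      x (hFd x)
  have hρd : ∀ x, DifferentiableAt ℝ ρ x := fun x => (aux_hasFDerivAt_rho x).differentiableAt
  have hcd : ∀ x, DifferentiableAt ℝ (fun y => ρ y / W y) x := by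
    intro x
    simp only [div_eq_mul_inv]
    exact (hρd x).mul ((hWd x).inv (ne_of_gt (hWpos x)))
  -- rewrite V
  have hVfun : ∀ q : EuclideanSpace ℝ (Fin n) × ℝ,
      V q = (ρ q.1 / W q.1) • (g q.1, (1:ℝ)) := by
    rintro ⟨y, s⟩
    exact hV y s
  rintro ⟨x, t⟩
  rw [pdiv]
  -- second term vanishes
  have hsnd : (fun q : EuclideanSpace ℝ (Fin n) × ℝ => (V q).2)
      = fun q : EuclideanSpace ℝ (Fin n) × ℝ => ρ q.1 / W q.1 := by
    funext q; rw [hVfun q]; simp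
  have hterm2 : fderiv ℝ (fun q : EuclideanSpace ℝ (Fin n) × ℝ => (V q).2) (x, t) (0, 1) = 0 := by
    rw [hsnd, aux_fderiv_comp_fst (fun y => ρ y / W y) (x, t) (hcd x) 0 1, map_zero]
  rw [hterm2, add_zero]
  -- first terms
  have hfst : ∀ i : Fin n, (fun q : EuclideanSpace ℝ (Fin n) × ℝ => (V q).1 i)
      = fun q : EuclideanSpace ℝ (Fin n) × ℝ => ρ q.1 * F q.1 i := by
    intro i
    funext q
    rw [hVfun q]
    simp only [Prod.smul_fst, PiLp.smul_apply, smul_eq_mul, hF_def]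
    ring
  have hterm1 : ∀ i : Fin n,
      fderiv ℝ (fun q : EuclideanSpace ℝ (Fin n) × ℝ => (V q).1 i) (x, t)
          (EuclideanSpace.single i 1, 0)
        = fderiv ℝ (fun y => ρ y * F y i) x (EuclideanSpace.single i 1) := by
    intro i
    rw [hfst i]
    exact aux_fderiv_comp_fst (fun y => ρ y * F y i) (x, t)
      ((hρd x).mul (hFid x i)) _ 0
  -- product rule
  have hprod : ∀ i : Fin n,
      fderiv ℝ (fun y => ρ y * F y i) x (EuclideanSpace.single i 1)
        = ρ x * fderiv ℝ (fun y => F y i) x (EuclideanSpace.single i 1)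
          + F x i * (-(ρ x * x i)) := by
    intro i
    rw [fderiv_fun_mul (hρd x) (hFid x i)]
    have hρderiv : fderiv ℝ ρ x (EuclideanSpace.single i 1) = -(ρ x * x i) := by
      rw [hρ_def, (aux_hasFDerivAt_rho x).fderiv]
      simp only [ContinuousLinearMap.smul_apply, smul_eq_mul, innerSL_apply_apply,
        ContinuousLinearMap.coe_smul', Pi.smul_apply, nsmul_eq_mul]
      rw [real_inner_comm, EuclideanSpace.inner_single_left]
      simp only [RingHom.id_apply, map_one, one_mul, conj_trivial]
      ring
    simp only [ContinuousLinearMap.add_apply, ContinuousLinearMap.smul_apply, smul_eq_mul]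
    rw [hρderiv]
  simp only [hterm1, hprod]
  rw [Finset.sum_add_distrib, ← Finset.mul_sum]
  have hediv : ∑ i, fderiv ℝ (fun y => F y i) x (EuclideanSpace.single i 1)
      = ⟪x, g x⟫ / W x := hmax x
  have hinner : ∑ i : Fin n, F x i * (-(ρ x * x i)) = -(ρ x * (⟪x, g x⟫ / W x)) := by
    have h1 : ⟪x, F x⟫ = (W x)⁻¹ * ⟪x, g x⟫ := real_inner_smul_right _ _ _
    have h2 : ⟪x, F x⟫ = ∑ i : Fin n, x i * F x i := by
      rw [PiLp.inner_apply]; simp only [RCLike.inner_apply', conj_trivial]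
    have h3 : ∑ i : Fin n, F x i * (-(ρ x * x i))
        = -(ρ x * ∑ i : Fin n, x i * F x i) := by
      rw [Finset.mul_sum, ← Finset.sum_neg_distrib]
      exact Finset.sum_congr rfl fun i _ => by ring
    rw [h3, ← h2, h1, div_eq_inv_mul]
  rw [hediv, hinner]
  ring
end
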